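/- Let $Z$ be a strictly positive integrable random variable and $\alpha>0$. Define $g(\lambda) := \tfrac{1}{\alpha}\mathbb{E}\big[Z\,(\log(\alpha/(\lambda Z)))^+\big]$ for $\lambda\in(0,\infty)$. Then $g$ is well-defined and finite (indeed $g(\lambda)\le 1/\lambda$), continuous, nonincreasing, satisfies $\lim_{\lambda\to\infty}g(\lambda)=0$ and $\lim_{\lambda\downarrow 0}g(\lambda)=+\infty$, and is strictly decreasing at every $\lambda$ with $g(\lambda)>0$. Consequently, for every $v>0$ there is a unique $\lambda>0$ with $g(\lambda)=v$. -/

import Mathlib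

open MeasureTheory ProbabilityTheory Filter

section Stmt5Aux

lemma ptw_bound {α lam z : ℝ} (hα : 0 < α) (hlam : 0 < lam) (hz : 0 < z) :
    z * max (Real.log (α / (lam * z))) 0 ≤ α / lam := by
  rcases le_or_gt (Real.log (α / (lam * z))) 0 with h | h
  · rw [max_eq_right h]; simp; positivity
  · rw [max_eq_left h.le]
    have hq : 0 < α / (lam * z) := by positivity
    have h1 := Real.log_le_sub_one_of_pos hq
    have h2 : z * Real.log (α/(lam*z)) ≤ z * (α/(lam*z) - 1) :=
      mul_le_mul_of_nonneg_left h1 hz.le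
    have h3 : z * (α/(lam*z) - 1) = α/lam - z := by field_simp
    linarith

lemma ptw_anti {α lam lam' z : ℝ} (hα : 0 < α) (hlam : 0 < lam) (hll : lam ≤ lam') (hz : 0 < z) :
    z * max (Real.log (α / (lam' * z))) 0 ≤ z * max (Real.log (α / (lam * z))) 0 := by
  apply mul_le_mul_of_nonneg_left _ hz.le
  apply max_le_max _ le_rfl
  have h1 : α / (lam' * z) ≤ α / (lam * z) :=
    div_le_div_of_nonneg_left hα.le (mul_pos hlam hz) (by nlinarith)
  exact Real.log_le_log (div_pos hα (mul_pos (hlam.trans_le hll) hz)) h1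

lemma ptw_strict {α lam lam' z : ℝ} (hα : 0 < α) (hlam' : 0 < lam') (hll : lam' < lam) (hz : 0 < z)
    (hpos : 0 < Real.log (α / (lam * z))) :
    z * max (Real.log (α / (lam * z))) 0 < z * max (Real.log (α / (lam' * z))) 0 := by
  have hq : 0 < α / (lam * z) := div_pos hα (mul_pos (hlam'.trans hll) hz)
  have h1 : α / (lam * z) < α / (lam' * z) :=
    div_lt_div_of_pos_left hα (mul_pos hlam' hz) (by nlinarith)
  have h2 : Real.log (α / (lam * z)) < Real.log (α / (lam' * z)) := Real.log_lt_log hq h1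
  have h3 : 0 < Real.log (α / (lam' * z)) := lt_trans hpos h2
  rw [max_eq_left hpos.le, max_eq_left h3.le]
  exact mul_lt_mul_of_pos_left h2 hz

lemma H_meas {Ω : Type*} {m0 : MeasurableSpace Ω} {Z : Ω → ℝ} (hZ : Measurable Z) (α lam : ℝ) :
    Measurable fun ω => Z ω * max (Real.log (α / (lam * Z ω))) 0 :=
  hZ.mul ((Real.measurable_log.comp (measurable_const.div (measurable_const.mul hZ))).max
    measurable_const)

lemma H_int {Ω : Type*} {m0 : MeasurableSpace Ω} {μ : Measure Ω} [IsProbabilityMeasure μ]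
    {Z : Ω → ℝ} (hZmeas : Measurable Z) (hZpos : ∀ᵐ ω ∂μ, 0 < Z ω)
    {α lam : ℝ} (hα : 0 < α) (hlam : 0 < lam) :
    Integrable (fun ω => Z ω * max (Real.log (α / (lam * Z ω))) 0) μ := by
  apply Integrable.mono' (integrable_const (α / lam)) (H_meas hZmeas α lam).aestronglyMeasurable
  filter_upwards [hZpos] with ω hω
  rw [Real.norm_eq_abs, abs_of_nonneg (mul_nonneg hω.le (le_max_right _ _))]
  exact ptw_bound hα hlam hω

end Stmt5Aux

theorem value_info_stmt5
    {Ω : Type*} {m0 : MeasurableSpace Ω} (μ : Measure Ω) [IsProbabilityMeasure μ]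
    (Z : Ω → ℝ) (hZmeas : Measurable Z) (hZpos : ∀ᵐ ω ∂μ, 0 < Z ω)
    (hZint : Integrable Z μ)
    (α : ℝ) (hα : 0 < α)
    (g : ℝ → ℝ)
    (hg : ∀ lam, g lam = (1 / α) * ∫ ω, Z ω * max (Real.log (α / (lam * Z ω))) 0 ∂μ) :
    (∀ lam, 0 < lam → Integrable (fun ω => Z ω * max (Real.log (α / (lam * Z ω))) 0) μ)
    ∧ (∀ lam, 0 < lam → g lam ≤ 1 / lam)
    ∧ ContinuousOn g (Set.Ioi 0)
    ∧ AntitoneOn g (Set.Ioi 0)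
    ∧ Tendsto g atTop (nhds 0)
    ∧ Tendsto g (nhdsWithin 0 (Set.Ioi 0)) atTop
    ∧ (∀ lam lam' : ℝ, 0 < lam' → lam' < lam → 0 < g lam → g lam < g lam')
    ∧ (∀ v : ℝ, 0 < v → ∃! lam : ℝ, 0 < lam ∧ g lam = v) := by
  set H : ℝ → Ω → ℝ := fun lam ω => Z ω * max (Real.log (α / (lam * Z ω))) 0 with hH
  have hint : ∀ lam, 0 < lam → Integrable (H lam) μ :=
    fun lam hlam => H_int hZmeas hZpos hα hlam
  have hIle : ∀ lam, 0 < lam → (∫ ω, H lam ω ∂μ) ≤ α / lam := by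
    intro lam hlam
    calc (∫ ω, H lam ω ∂μ) ≤ ∫ _ω, α / lam ∂μ := by
          apply integral_mono_ae (hint lam hlam) (integrable_const _)
          filter_upwards [hZpos] with ω hω using ptw_bound hα hlam hω
      _ = α / lam := by simp
  have hInonneg : ∀ lam, 0 ≤ ∫ ω, H lam ω ∂μ := by
    intro lam
    apply integral_nonneg_of_ae
    filter_upwards [hZpos] with ω hω using mul_nonneg hω.le (le_max_right _ _)
  have hgnonneg : ∀ lam, 0 ≤ g lam := by
    intro lam; rw [hg lam]
    exact mul_nonneg (by positivity) (hInonneg lam)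
  have hgle : ∀ lam, 0 < lam → g lam ≤ 1 / lam := by
    intro lam hlam
    rw [hg lam]
    have := mul_le_mul_of_nonneg_left (hIle lam hlam) (le_of_lt (by positivity : (0:ℝ) < 1/α))
    calc (1/α) * ∫ ω, H lam ω ∂μ ≤ (1/α) * (α/lam) := this
      _ = 1 / lam := by field_simp
  -- antitone
  have hIanti : ∀ a b : ℝ, 0 < a → a ≤ b → (∫ ω, H b ω ∂μ) ≤ ∫ ω, H a ω ∂μ := by
    intro a b ha hab
    apply integral_mono_ae (hint b (ha.trans_le hab)) (hint a ha)
    filter_upwards [hZpos] with ω hω using ptw_anti hα ha hab hω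
  have hganti : AntitoneOn g (Set.Ioi 0) := by
    intro a ha b hb hab
    rw [hg a, hg b]
    exact mul_le_mul_of_nonneg_left (hIanti a b (Set.mem_Ioi.mp ha) hab) (by positivity)
  -- continuity
  have hgc : ContinuousOn g (Set.Ioi 0) := by
    intro x hx
    have hx0 : (0:ℝ) < x := Set.mem_Ioi.mp hx
    have hI : ContinuousAt (fun l => ∫ ω, H l ω ∂μ) x := by
      apply continuousAt_of_dominated (bound := fun _ => α / (x/2))
      · filter_upwards with l using (H_meas hZmeas α l).aestronglyMeasurable
      · filter_upwards [eventually_gt_nhds (show x/2 < x by linarith)] with l hl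
        filter_upwards [hZpos] with ω hω
        rw [Real.norm_eq_abs, abs_of_nonneg (mul_nonneg hω.le (le_max_right _ _))]
        refine (ptw_bound hα (by linarith) hω).trans ?_
        exact div_le_div_of_nonneg_left hα.le (by linarith) hl.le
      · exact integrable_const _
      · filter_upwards [hZpos] with ω hω
        have hZne : Z ω ≠ 0 := hω.ne'
        have hd : ContinuousAt (fun l : ℝ => α / (l * Z ω)) x :=
          continuousAt_const.div (continuousAt_id.mul continuousAt_const)
            (by simp [hx0.ne', hZne])
        have hlg : ContinuousAt (fun l : ℝ => Real.log (α / (l * Z ω))) x :=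
          (Real.continuousAt_log (by positivity)).comp hd
        exact continuousAt_const.mul (hlg.max continuousAt_const)
    have : ContinuousAt g x := by
      have : ContinuousAt (fun l => (1/α) * ∫ ω, H l ω ∂μ) x := continuousAt_const.mul hI
      exact this.congr (by filter_upwards with l using (hg l).symm)
    exact this.continuousWithinAt
  -- tendsto atTop to 0
  have hgtop : Tendsto g atTop (nhds 0) := by
    apply tendsto_of_tendsto_of_tendsto_of_le_of_le' tendsto_const_nhds
      tendsto_inv_atTop_zero
    · filter_upwards with l using hgnonneg l
    · filter_upwards [eventually_gt_atTop (0:ℝ)] with l hl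
      simpa [one_div] using hgle l hl
  -- find a positive-measure band for Z
  obtain ⟨c, hc, hδ⟩ : ∃ c : ℝ, 0 < c ∧ 0 < μ (Z ⁻¹' Set.Icc c (1/c)) := by
    by_contra hcon
    push_neg at hcon
    have hnull : ∀ n : ℕ, μ (Z ⁻¹' Set.Icc (1/((n:ℝ)+1)) ((n:ℝ)+1)) = 0 := by
      intro n
      have h1 : (0:ℝ) < 1/((n:ℝ)+1) := by positivity
      have := (hcon _ h1).antisymm (zero_le)
      rwa [one_div_one_div] at this
    have hcup : μ (⋃ n : ℕ, Z ⁻¹' Set.Icc (1/((n:ℝ)+1)) ((n:ℝ)+1)) = 0 :=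
      measure_iUnion_null fun n => hnull n
    have hsub : {ω | 0 < Z ω} ⊆ ⋃ n : ℕ, Z ⁻¹' Set.Icc (1/((n:ℝ)+1)) ((n:ℝ)+1) := by
      intro ω hω
      simp only [Set.mem_setOf_eq] at hω
      obtain ⟨n, hn⟩ := exists_nat_ge (max (1/Z ω) (Z ω))
      refine Set.mem_iUnion.mpr ⟨n, ?_, ?_⟩
      · have h1 : 1 / Z ω ≤ (n:ℝ) + 1 := ((le_max_left _ _).trans hn).trans (by linarith)
        calc 1/((n:ℝ)+1) ≤ 1/(1/Z ω) :=
              div_le_div_of_nonneg_left one_pos.le (by positivity) h1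
          _ = Z ω := one_div_one_div _
      · exact ((le_max_right _ _).trans hn).trans (by linarith)
    have h1 : (1:ENNReal) ≤ 0 := by
      calc (1:ENNReal) = μ {ω | 0 < Z ω} := by
            rw [measure_congr (Filter.eventuallyEq_univ.mpr hZpos), measure_univ]
        _ ≤ μ (⋃ n : ℕ, Z ⁻¹' Set.Icc (1/((n:ℝ)+1)) ((n:ℝ)+1)) := measure_mono hsub
        _ = 0 := hcup
    simp at h1
  set s : Set Ω := Z ⁻¹' Set.Icc c (1/c) with hs
  have hsmeas : MeasurableSet s := hZmeas measurableSet_Icc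
  have hδr : 0 < (μ s).toReal := ENNReal.toReal_pos hδ.ne' (measure_ne_top μ s)
  -- lower bound for small lam
  have hlow : ∀ lam : ℝ, 0 < lam → lam < α * c →
      ((1/α) * c * (μ s).toReal) * Real.log (α * c / lam) ≤ g lam := by
    intro lam hlam hlac
    have hlogpos : 0 < Real.log (α * c / lam) := by
      apply Real.log_pos
      rw [lt_div_iff₀ hlam]; linarith
    have hptw : ∀ᵐ ω ∂μ, s.indicator (fun _ => c * Real.log (α * c / lam)) ω ≤ H lam ω := by
      filter_upwards [hZpos] with ω hω
      by_cases hωs : ω ∈ s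
      · rw [Set.indicator_of_mem hωs]
        obtain ⟨h1, h2⟩ := hωs
        have hZub : Z ω ≤ 1/c := h2
        have hkey : α * c / lam ≤ α / (lam * Z ω) := by
          rw [div_le_div_iff₀ hlam (by positivity)]
          have : Z ω * c ≤ 1 := by
            calc Z ω * c ≤ (1/c) * c := by nlinarith
              _ = 1 := by field_simp
          have h4 : (α*lam) * (Z ω * c) ≤ (α*lam) * 1 :=
            mul_le_mul_of_nonneg_left this (by positivity)
          nlinarith [h4]
        have hlog : Real.log (α * c / lam) ≤ Real.log (α / (lam * Z ω)) :=
          Real.log_le_log (by positivity) hkey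
        calc c * Real.log (α * c / lam) ≤ Z ω * Real.log (α * c / lam) := by nlinarith
          _ ≤ Z ω * max (Real.log (α / (lam * Z ω))) 0 := by
              apply mul_le_mul_of_nonneg_left _ hω.le
              exact hlog.trans (le_max_left _ _)
      · rw [Set.indicator_of_notMem hωs]
        exact mul_nonneg hω.le (le_max_right _ _)
    have hind : (∫ ω, s.indicator (fun _ => c * Real.log (α * c / lam)) ω ∂μ)
        = (μ s).toReal * (c * Real.log (α * c / lam)) := by
      rw [integral_indicator_const _ hsmeas]; simp [mul_comm, Measure.real]
    have hII : (μ s).toReal * (c * Real.log (α * c / lam)) ≤ ∫ ω, H lam ω ∂μ := by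
      rw [← hind]
      exact integral_mono_ae ((integrable_const _).indicator hsmeas) (hint lam hlam) hptw
    rw [hg lam]
    have h1α : (0:ℝ) < 1/α := by positivity
    calc ((1/α) * c * (μ s).toReal) * Real.log (α * c / lam)
        = (1/α) * ((μ s).toReal * (c * Real.log (α * c / lam))) := by ring
      _ ≤ (1/α) * ∫ ω, H lam ω ∂μ := mul_le_mul_of_nonneg_left hII h1α.le
  have hgbot : Tendsto g (nhdsWithin 0 (Set.Ioi 0)) atTop := by
    have hK : 0 < (1/α) * c * (μ s).toReal := by positivity
    have hlogb : Tendsto Real.log (nhdsWithin (0:ℝ) (Set.Ioi 0)) atBot :=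
      Real.tendsto_log_nhdsGT_zero
    have h2 : Tendsto (fun lam : ℝ => Real.log (α*c) + -Real.log lam)
        (nhdsWithin 0 (Set.Ioi 0)) atTop :=
      tendsto_atTop_add_const_left _ _ (tendsto_neg_atBot_atTop.comp hlogb)
    have htlog : Tendsto (fun lam : ℝ => Real.log (α * c / lam))
        (nhdsWithin 0 (Set.Ioi 0)) atTop := by
      apply h2.congr'
      filter_upwards [self_mem_nhdsWithin] with lam hlam
      rw [Real.log_div (by positivity) (ne_of_gt (Set.mem_Ioi.mp hlam)), sub_eq_add_neg]
    apply tendsto_atTop_mono' _ _ (htlog.const_mul_atTop hK)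
    filter_upwards [Ioo_mem_nhdsGT_of_mem (show (0:ℝ) ∈ Set.Ico 0 (α*c) from ⟨le_refl 0, by positivity⟩)]
      with lam hlam
    exact hlow lam hlam.1 hlam.2
  -- strict decrease where positive
  have hstrict : ∀ lam lam' : ℝ, 0 < lam' → lam' < lam → 0 < g lam → g lam < g lam' := by
    intro lam lam' hlam' hll hpos
    have hlam : 0 < lam := hlam'.trans hll
    have hIpos : 0 < ∫ ω, H lam ω ∂μ := by
      by_contra hle
      push_neg at hle
      have : g lam ≤ 0 := by
        rw [hg lam]
        exact mul_nonpos_of_nonneg_of_nonpos (by positivity) hle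
      linarith
    have hHnn : 0 ≤ᵐ[μ] H lam := by
      filter_upwards [hZpos] with ω hω using mul_nonneg hω.le (le_max_right _ _)
    have hsupp : 0 < μ (Function.support (H lam)) :=
      (integral_pos_iff_support_of_nonneg_ae hHnn (hint lam hlam)).mp hIpos
    set D : Ω → ℝ := fun ω => H lam' ω - H lam ω with hD
    have hDnn : 0 ≤ᵐ[μ] D := by
      filter_upwards [hZpos] with ω hω
      have := ptw_anti hα hlam' hll.le hω
      simp only [hD, hH, Pi.zero_apply]
      linarith [this]
    have hsub2 : Function.support (H lam) ⊆ Function.support D ∪ {ω | ¬ 0 < Z ω} := by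
      intro ω hω
      by_cases hZω : 0 < Z ω
      · left
        have hne : H lam ω ≠ 0 := hω
        have hmax : max (Real.log (α / (lam * Z ω))) 0 ≠ 0 := by
          intro h0
          apply hne
          simp [hH, h0]
        have hx : 0 < Real.log (α / (lam * Z ω)) := by
          rcases le_or_gt (Real.log (α / (lam * Z ω))) 0 with h | h
          · exact absurd (max_eq_right h) hmax
          · exact h
        have := ptw_strict hα hlam' hll hZω hx
        have : H lam ω < H lam' ω := this
        simp only [Function.mem_support, hD]
        intro h0
        linarith [this]
      · right; exact hZω
    have hbad : μ {ω | ¬ 0 < Z ω} = 0 := ae_iff.mp hZpos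
    have hDsupp : 0 < μ (Function.support D) := by
      rcases eq_or_ne (μ (Function.support D)) 0 with h0 | h0
      · exfalso
        have : μ (Function.support (H lam)) = 0 := by
          apply le_antisymm _ (zero_le)
          calc μ (Function.support (H lam))
              ≤ μ (Function.support D ∪ {ω | ¬ 0 < Z ω}) := measure_mono hsub2
            _ ≤ μ (Function.support D) + μ {ω | ¬ 0 < Z ω} := measure_union_le _ _
            _ = 0 := by rw [h0, hbad, add_zero]
        exact absurd this hsupp.ne'
      · exact h0.bot_lt
    have hDint : Integrable D μ := (hint lam' hlam').sub (hint lam hlam)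
    have hDpos : 0 < ∫ ω, D ω ∂μ :=
      (integral_pos_iff_support_of_nonneg_ae hDnn hDint).mpr hDsupp
    have hsubint : (∫ ω, D ω ∂μ) = (∫ ω, H lam' ω ∂μ) - ∫ ω, H lam ω ∂μ :=
      integral_sub (hint lam' hlam') (hint lam hlam)
    have hII : (∫ ω, H lam ω ∂μ) < ∫ ω, H lam' ω ∂μ := by linarith [hDpos, hsubint.symm.le]
    rw [hg lam, hg lam']
    exact mul_lt_mul_of_pos_left hII (by positivity)
  -- existence and uniqueness
  have hEU : ∀ v : ℝ, 0 < v → ∃! lam : ℝ, 0 < lam ∧ g lam = v := by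
    intro v hv
    obtain ⟨a, hga, ha⟩ := ((hgbot.eventually_ge_atTop v).and self_mem_nhdsWithin).exists
    replace ha : 0 < a := Set.mem_Ioi.mp ha
    obtain ⟨b, hgb, hb⟩ := ((hgtop.eventually_lt_const hv).and (eventually_gt_atTop (0:ℝ))).exists
    set b' := max a b with hb'def
    have hab' : a ≤ b' := le_max_left a b
    have hb' : 0 < b' := lt_of_lt_of_le ha hab'
    have hgb' : g b' ≤ v :=
      le_of_lt (lt_of_le_of_lt (hganti (Set.mem_Ioi.mpr hb) (Set.mem_Ioi.mpr hb')
        (le_max_right a b)) hgb)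
    have hsubIcc : Set.Icc a b' ⊆ Set.Ioi 0 := fun x hx => lt_of_lt_of_le ha hx.1
    have hiv := intermediate_value_Icc' hab' (hgc.mono hsubIcc)
      (Set.mem_Icc.mpr ⟨hgb', hga⟩)
    obtain ⟨lam, hlmem, hgl⟩ := hiv
    have hlampos : 0 < lam := lt_of_lt_of_le ha hlmem.1
    refine ⟨lam, ⟨hlampos, hgl⟩, ?_⟩
    rintro y ⟨hy, hgy⟩
    by_contra hne
    rcases lt_or_gt_of_ne hne with h | h
    · have := hstrict lam y hy h (by rw [hgl]; exact hv)
      rw [hgl, hgy] at this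
      exact lt_irrefl v this
    · have := hstrict y lam hlampos h (by rw [hgy]; exact hv)
      rw [hgl, hgy] at this
      exact lt_irrefl v this
  exact ⟨hint, hgle, hgc, hganti, hgtop, hgbot, hstrict, hEU⟩
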